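/- Let g, h : ℝ^m → ℝ be strongly convex with the same parameter ρ > 0, and set φ := g − h. Fix x ∈ ℝ^m, take any u ∈ ∂h(x), and let y be a minimizer over ℝ^m of the function z ↦ g(z) − ⟨u, z⟩. Then φ(y) ≤ φ(x) − ρ‖y − x‖². -/
import Mathlib

open RealInnerProductSpace

/-- The convex subdifferential of `f` at `x`. -/
def subdiff {E : Type*} [NormedAddCommGroup E] [InnerProductSpace ℝ E]
    (f : E → ℝ) (x : E) : Set E :=
  {w | ∀ y, f x + ⟪w, y - x⟫ ≤ f y}

/-- Strong convexity inequality from convexity of the shifted function. -/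
lemma strong_ineq {E : Type*} [NormedAddCommGroup E] [InnerProductSpace ℝ E]
    {f : E → ℝ} {ρ : ℝ}
    (hf : ConvexOn ℝ Set.univ (fun z => f z - ρ / 2 * ‖z‖ ^ 2))
    {a b : ℝ} (ha : 0 ≤ a) (hb : 0 ≤ b) (hab : a + b = 1) (x y : E) :
    f (a • x + b • y) ≤ a * f x + b * f y - ρ / 2 * (a * b * ‖x - y‖ ^ 2) := by
  have hc := hf.2 (Set.mem_univ x) (Set.mem_univ y) ha hb hab
  simp only [smul_eq_mul] at hc
  have hid : ‖a • x + b • y‖ ^ 2 = a * ‖x‖ ^ 2 + b * ‖y‖ ^ 2 - a * b * ‖x - y‖ ^ 2 := by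
    have e1 : ‖a • x + b • y‖ ^ 2 = ⟪a • x + b • y, a • x + b • y⟫ := by
      rw [real_inner_self_eq_norm_sq]
    have e2 : ‖x - y‖ ^ 2 = ⟪x - y, x - y⟫ := by rw [real_inner_self_eq_norm_sq]
    have e3 : ‖x‖ ^ 2 = ⟪x, x⟫ := by rw [real_inner_self_eq_norm_sq]
    have e4 : ‖y‖ ^ 2 = ⟪y, y⟫ := by rw [real_inner_self_eq_norm_sq]
    rw [e1, e2, e3, e4]
    simp only [inner_add_add_self, inner_sub_sub_self, real_inner_smul_left,
      real_inner_smul_right]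
    linear_combination (a * ⟪x, x⟫ + b * ⟪y, y⟫) * hab
  rw [hid] at hc
  nlinarith [hc]

lemma limit_aux {A B n ρ : ℝ}
    (P : ∀ t : ℝ, t ∈ Set.Ioo (0:ℝ) 1 → A + ρ / 2 * ((1 - t) * n) ≤ B) :
    A + ρ / 2 * n ≤ B := by
  have hcont : Continuous fun t : ℝ => A + ρ / 2 * ((1 - t) * n) := by continuity
  have h1 : Filter.Tendsto (fun t : ℝ => A + ρ / 2 * ((1 - t) * n))
      (nhdsWithin 0 (Set.Ioi 0)) (nhds (A + ρ / 2 * ((1 - 0) * n))) :=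
    (hcont.tendsto 0).mono_left nhdsWithin_le_nhds
  simp only [sub_zero, one_mul] at h1
  refine le_of_tendsto h1 ?_
  exact Filter.eventually_of_mem (Ioo_mem_nhdsGT_of_mem ⟨le_refl 0, one_pos⟩) P

theorem stmt4 {m : ℕ} (g h : EuclideanSpace ℝ (Fin m) → ℝ) (ρ : ℝ) (hρ : 0 < ρ)
    (hg : ConvexOn ℝ Set.univ (fun z => g z - ρ / 2 * ‖z‖ ^ 2))
    (hh : ConvexOn ℝ Set.univ (fun z => h z - ρ / 2 * ‖z‖ ^ 2))
    (x u y : EuclideanSpace ℝ (Fin m))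
    (hu : u ∈ subdiff h x)
    (hy : ∀ z, g y - ⟪u, y⟫ ≤ g z - ⟪u, z⟫) :
    g y - h y ≤ (g x - h x) - ρ * ‖y - x‖ ^ 2 := by
  set n : ℝ := ‖y - x‖ ^ 2 with hn
  have hxy : ‖x - y‖ ^ 2 = n := by rw [hn, norm_sub_rev]
  have step1 : (h x + ⟪u, y - x⟫) + ρ / 2 * n ≤ h y := by
    apply limit_aux
    intro t ht
    obtain ⟨ht0, ht1⟩ := ht
    have hs := strong_ineq hh (a := 1 - t) (b := t) (by linarith) ht0.le (by ring) x y
    rw [hxy] at hs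
    have hsub := hu ((1 - t) • x + t • y)
    have harg : (1 - t) • x + t • y - x = t • (y - x) := by module
    rw [harg, real_inner_smul_right] at hsub
    have key2 : t * ((h x + ⟪u, y - x⟫) + ρ / 2 * ((1 - t) * n)) ≤ t * h y := by
      nlinarith [hsub.trans hs]
    exact le_of_mul_le_mul_left key2 ht0
  have step2 : (g y - ⟪u, y⟫) + ρ / 2 * n ≤ g x - ⟪u, x⟫ := by
    apply limit_aux
    intro t ht
    obtain ⟨ht0, ht1⟩ := ht
    have hs := strong_ineq hg (a := 1 - t) (b := t) (by linarith) ht0.le (by ring) y x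
    have hyx : ‖y - x‖ ^ 2 = n := rfl
    rw [hyx] at hs
    have hmin := hy ((1 - t) • y + t • x)
    have hin : ⟪u, (1 - t) • y + t • x⟫ = (1 - t) * ⟪u, y⟫ + t * ⟪u, x⟫ := by
      rw [inner_add_right, real_inner_smul_right, real_inner_smul_right]
    rw [hin] at hmin
    have key2 : t * ((g y - ⟪u, y⟫) + ρ / 2 * ((1 - t) * n)) ≤ t * (g x - ⟪u, x⟫) := by
      nlinarith [hmin, hs]
    exact le_of_mul_le_mul_left key2 ht0
  have hiu : ⟪u, y - x⟫ = ⟪u, y⟫ - ⟪u, x⟫ := inner_sub_right u y x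
  linarith [step1, step2]
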